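/- A control state p₀ of a one-dimensional BVASS (Q,Δ,F) is unbounded if and only if there is a sequence p₀ t₁ p₁ t₂ ⋯ t_k p_k of states and transitions with k ≤ |Q| and some j < k such that: (i) source(t_i) = p_{i-1} and p_i ∈ targets(t_i) for all i; (ii) p_k = p_j and p_i ≠ p_j for all i < j; (iii) p(0) is coverable for every p in ∪_i targets(t_i); and (iv) for each j < i ≤ k there is n_i ≤ |Q|+1 with: if t_i is a branching transition with side branch p'_i then p'_i(n_i) is coverable, else n_i = 0; and Σ_{i=j+1}^k n_i > Σ_{i=j+1}^k effect(t_i). -/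

import Mathlib

/-- A one-dimensional branching vector addition system with states:
branching transitions `br`, unary transitions `un` with update in `{-1,0,1}`,
and final states `final`. -/
structure BVASS1 (Q : Type) where
  br : Q → Q → Q → Prop
  un : Q → ℤ → Q → Prop
  un_small : ∀ q z p, un q z p → z = -1 ∨ z = 0 ∨ z = 1
  final : Q → Prop

/-- A finite binary tree with nodes given by a prefix-closed set of words over
`Bool` and labels in `Q × ℕ`. -/
structure BTree (Q : Type) where
  dom : Set (List Bool)
  label : List Bool → Q × ℕ
  finite : dom.Finite
  root_mem : ([] : List Bool) ∈ dom
  prefixClosed : ∀ ⦃u v : List Bool⦄, v ∈ dom → u <+: v → u ∈ dom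

/-- `u` is a strict ancestor of `v`. -/
def StrictPrefix (u v : List Bool) : Prop := u <+: v ∧ u ≠ v

/-- `u` is the lowest common ancestor of `v` and `w`. -/
def IsLCA (u v w : List Bool) : Prop :=
  u <+: v ∧ u <+: w ∧ ∀ u', u' <+: v → u' <+: w → u' <+: u

namespace BTree

variable {Q : Type}

def state (T : BTree Q) (u : List Bool) : Q := (T.label u).1

def counter (T : BTree Q) (u : List Bool) : ℕ := (T.label u).2

def IsLeaf (T : BTree Q) (u : List Bool) : Prop :=
  u ∈ T.dom ∧ ∀ b : Bool, u ++ [b] ∉ T.dom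

/-- The subtree of `T` rooted at node `u`. -/
def subtree (T : BTree Q) (u : List Bool) (hu : u ∈ T.dom) : BTree Q where
  dom := {x | u ++ x ∈ T.dom}
  label := fun x => T.label (u ++ x)
  finite := Set.Finite.preimage
    (Function.Injective.injOn fun a b h => by simpa using h) T.finite
  root_mem := by simpa using hu
  prefixClosed := by
    rintro a c hc ⟨t, rfl⟩
    exact T.prefixClosed hc ⟨t, by simp⟩

/-- All counter values in the tree are at most `j`. -/
def Bounded (T : BTree Q) (j : ℕ) : Prop := ∀ u ∈ T.dom, T.counter u ≤ j

/-- All counter values, except possibly the root's, are at most `j`. -/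
def AlmostBounded (T : BTree Q) (j : ℕ) : Prop :=
  ∀ u ∈ T.dom, u ≠ [] → T.counter u ≤ j

/-- A node is increasing if it has a strict ancestor with the same state
and a strictly smaller counter value. -/
def Increasing (T : BTree Q) (v : List Bool) : Prop :=
  ∃ u ∈ T.dom, StrictPrefix u v ∧ T.state u = T.state v ∧ T.counter u < T.counter v

/-- `u` is the anchor of the increasing node `v`: the maximal strict ancestor of `v`
with the same state and strictly smaller counter value. -/
def IsAnchorOf (T : BTree Q) (u v : List Bool) : Prop :=
  u ∈ T.dom ∧ StrictPrefix u v ∧ T.state u = T.state v ∧ T.counter u < T.counter v ∧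
    ∀ u' ∈ T.dom, StrictPrefix u' v → T.state u' = T.state v →
      T.counter u' < T.counter v → u' <+: u

/-- The tree is exclusive: the least common ancestor of any two distinct increasing
leaves is a strict ancestor of at least one of their anchors. -/
def Exclusive (T : BTree Q) : Prop :=
  ∀ v w, T.IsLeaf v → T.IsLeaf w → T.Increasing v → T.Increasing w → v ≠ w →
    ∀ a b l, T.IsAnchorOf a v → T.IsAnchorOf b w → IsLCA l v w →
      StrictPrefix l a ∨ StrictPrefix l b

end BTree

namespace BVASS1

variable {Q : Type}

/-- `T` is a partial reachability tree of `B`: at every inner node either a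
branching transition splits the counter over two children, or a unary transition
changes the counter by `z` along a single-child edge. -/
def IsPRT (B : BVASS1 Q) (T : BTree Q) : Prop :=
  ∀ u ∈ T.dom, ¬ T.IsLeaf u →
    ((u ++ [false] ∈ T.dom ∧ u ++ [true] ∈ T.dom ∧
        B.br (T.state u) (T.state (u ++ [false])) (T.state (u ++ [true])) ∧
        T.counter u = T.counter (u ++ [false]) + T.counter (u ++ [true])) ∨
     (u ++ [false] ∈ T.dom ∧ u ++ [true] ∉ T.dom ∧
        ∃ z : ℤ, B.un (T.state u) z (T.state (u ++ [false])) ∧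
          (T.counter (u ++ [false]) : ℤ) = (T.counter u : ℤ) + z))

/-- `T` is a (full) reachability tree of `B`: a partial reachability tree all of
whose leaves are accepting (final state, counter zero). -/
def IsRT (B : BVASS1 Q) (T : BTree Q) : Prop :=
  B.IsPRT T ∧ ∀ u, T.IsLeaf u → B.final (T.state u) ∧ T.counter u = 0

/-- The configuration `q(n)` is reachable. -/
def Reachable (B : BVASS1 Q) (q : Q) (n : ℕ) : Prop :=
  ∃ T : BTree Q, B.IsRT T ∧ T.label [] = (q, n)

/-- The reachability set of a control state. -/
def reachSet (B : BVASS1 Q) (q : Q) : Set ℕ := {n | B.Reachable q n}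

/-- The configuration `q(n)` is coverable. -/
def Coverable (B : BVASS1 Q) (q : Q) (n : ℕ) : Prop :=
  ∃ m, n ≤ m ∧ B.Reachable q m

/-- `T` is expandable: exclusive, every leaf is accepting or increasing, and every
increasing leaf with its anchor induces a positive residue-reachability instance. -/
def Expandable (B : BVASS1 Q) (T : BTree Q) : Prop :=
  T.Exclusive ∧
  (∀ v, T.IsLeaf v → (B.final (T.state v) ∧ T.counter v = 0) ∨ T.Increasing v) ∧
  (∀ v u, T.IsLeaf v → T.IsAnchorOf u v →
    ∃ l, B.Reachable (T.state v) l ∧ T.counter v ≤ l ∧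
      l ≡ T.counter v [MOD T.counter v - T.counter u])

end BVASS1

/-- A transition of a one-dimensional BVASS, as a datum. -/
inductive BTrans (Q : Type) : Type
  | br : Q → Q → Q → BTrans Q
  | un : Q → ℤ → Q → BTrans Q

namespace BTrans

variable {Q : Type}

/-- The transition belongs to the BVASS `B`. -/
def mem (B : BVASS1 Q) : BTrans Q → Prop
  | .br q p p' => B.br q p p'
  | .un q z p => B.un q z p

/-- The source state of a transition. -/
def src : BTrans Q → Q
  | .br q _ _ => q
  | .un q _ _ => q

/-- The target states of a transition. -/
def tgts : BTrans Q → Set Q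
  | .br _ p p' => {p, p'}
  | .un _ _ p => {p}

/-- The effect of a transition: `0` for branching, `z` for unary. -/
def eff : BTrans Q → ℤ
  | .br _ _ _ => 0
  | .un _ z _ => z

end BTrans

section Dev1
namespace BVASS1

variable {Q : Type}

/-- Inductive characterization of reachability. -/
inductive Reach (B : BVASS1 Q) : Q → ℕ → Prop
  | final {q} : B.final q → Reach B q 0
  | un {q} {z : ℤ} {p} {n n' : ℕ} : B.un q z p → Reach B p n' → (n' : ℤ) = (n : ℤ) + z → Reach B q n
  | br {q a b m m'} : B.br q a b → Reach B a m → Reach B b m' → Reach B q (m + m')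

/-- single node tree -/
def leafTree (q : Q) : BTree Q where
  dom := {[]}
  label := fun _ => (q, 0)
  finite := Set.finite_singleton _
  root_mem := rfl
  prefixClosed := by
    rintro u v hv huv
    simp only [Set.mem_singleton_iff] at hv ⊢
    subst hv
    exact List.prefix_nil.mp huv

lemma leafTree_isRT (B : BVASS1 Q) (q : Q) (hq : B.final q) : B.IsRT (leafTree q) ∧ (leafTree q).label [] = (q, 0) := by
  refine ⟨⟨?_, ?_⟩, rfl⟩
  · intro u hu hnl
    exfalso
    apply hnl
    refine ⟨hu, ?_⟩
    intro b hb
    simp only [leafTree, Set.mem_singleton_iff] at hb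
    exact absurd hb (by simp)
  · intro u _
    exact ⟨hq, rfl⟩

end BVASS1
end Dev1
section Dev2
namespace BVASS1

variable {Q : Type}

/-- prepend a root with a unary edge to a tree -/
def consTree (q : Q) (n : ℕ) (T : BTree Q) : BTree Q where
  dom := insert [] ((false :: ·) '' T.dom)
  label := fun v => match v with
    | [] => (q, n)
    | false :: u => T.label u
    | true :: _ => (q, 0)
  finite := (T.finite.image _).insert _
  root_mem := Set.mem_insert _ _
  prefixClosed := by
    rintro u v hv huv
    rcases hv with rfl | ⟨w, hw, rfl⟩
    · left; exact List.prefix_nil.mp huv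
    · rcases u with _ | ⟨b, u'⟩
      · left; rfl
      · rcases List.cons_prefix_cons.mp huv with ⟨rfl, h2⟩
        right; exact ⟨u', T.prefixClosed hw h2, rfl⟩

@[simp] lemma mem_consTree_dom {q : Q} {n : ℕ} {T : BTree Q} {v : List Bool} :
    v ∈ (consTree q n T).dom ↔ v = [] ∨ ∃ u ∈ T.dom, v = false :: u := by
  simp [consTree, Set.mem_insert_iff, Set.mem_image, eq_comm, and_comm]

lemma consTree_isLeaf_iff {q : Q} {n : ℕ} {T : BTree Q} {w : List Bool} :
    (consTree q n T).IsLeaf (false :: w) ↔ T.IsLeaf w := by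
  constructor
  · rintro ⟨hm, hc⟩
    rcases mem_consTree_dom.mp hm with h | ⟨u, hu, hu'⟩
    · exact absurd h (by simp)
    · obtain rfl : w = u := by simpa using hu'
      refine ⟨hu, fun b hb => hc b ?_⟩
      exact mem_consTree_dom.mpr (Or.inr ⟨w ++ [b], hb, rfl⟩)
  · rintro ⟨hm, hc⟩
    refine ⟨mem_consTree_dom.mpr (Or.inr ⟨w, hm, rfl⟩), fun b hb => ?_⟩
    rcases mem_consTree_dom.mp hb with h | ⟨u, hu, hu'⟩
    · exact absurd h (by simp)
    · obtain rfl : w ++ [b] = u := by simpa using hu'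
      exact hc b hu

lemma consTree_isRT {B : BVASS1 Q} {T : BTree Q} {q : Q} {n : ℕ} {z : ℤ}
    (hT : B.IsRT T) (hz : B.un q z (T.state [])) (hc : (T.counter [] : ℤ) = (n : ℤ) + z) :
    B.IsRT (consTree q n T) := by
  have hstate : ∀ u, (consTree q n T).state (false :: u) = T.state u := fun u => rfl
  have hcount : ∀ u, (consTree q n T).counter (false :: u) = T.counter u := fun u => rfl
  constructor
  · intro u hu hnl
    rcases mem_consTree_dom.mp hu with rfl | ⟨w, hw, rfl⟩
    · right
      refine ⟨mem_consTree_dom.mpr (Or.inr ⟨[], T.root_mem, rfl⟩), ?_, z, ?_, ?_⟩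
      · intro hmem
        rcases mem_consTree_dom.mp hmem with h | ⟨u, _, hu'⟩
        · simp at h
        · simp at hu'
      · exact hz
      · exact hc
    · have hnl' : ¬ T.IsLeaf w := fun h => hnl (consTree_isLeaf_iff.mpr h)
      rcases hT.1 w hw hnl' with ⟨h1, h2, h3, h4⟩ | ⟨h1, h2, z', h3, h4⟩
      · left
        refine ⟨mem_consTree_dom.mpr (Or.inr ⟨w ++ [false], h1, rfl⟩),
                mem_consTree_dom.mpr (Or.inr ⟨w ++ [true], h2, rfl⟩), ?_, ?_⟩
        · simpa [hstate] using h3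
        · simpa [hcount] using h4
      · right
        refine ⟨mem_consTree_dom.mpr (Or.inr ⟨w ++ [false], h1, rfl⟩), ?_, z', ?_, ?_⟩
        · intro hmem
          rcases mem_consTree_dom.mp hmem with h | ⟨u, hu, hu'⟩
          · simp at h
          · obtain rfl : w ++ [true] = u := by simpa using hu'
            exact h2 hu
        · simpa [hstate] using h3
        · simpa [hcount] using h4
  · intro u hul
    have hu := hul.1
    rcases mem_consTree_dom.mp hu with rfl | ⟨w, hw, rfl⟩
    · exfalso
      exact hul.2 false (mem_consTree_dom.mpr (Or.inr ⟨[], T.root_mem, rfl⟩))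
    · exact hT.2 w (consTree_isLeaf_iff.mp hul)

end BVASS1
end Dev2
section Dev3
namespace BVASS1

variable {Q : Type}

/-- join two trees below a new branching root -/
def brTree (q : Q) (T₁ T₂ : BTree Q) : BTree Q where
  dom := insert [] ((false :: ·) '' T₁.dom ∪ (true :: ·) '' T₂.dom)
  label := fun v => match v with
    | [] => (q, T₁.counter [] + T₂.counter [])
    | false :: u => T₁.label u
    | true :: u => T₂.label u
  finite := ((T₁.finite.image _).union (T₂.finite.image _)).insert _
  root_mem := Set.mem_insert _ _
  prefixClosed := by
    rintro u v hv huv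
    rcases hv with rfl | (⟨w, hw, rfl⟩ | ⟨w, hw, rfl⟩)
    · left; exact List.prefix_nil.mp huv
    · rcases u with _ | ⟨b, u'⟩
      · left; rfl
      · rcases List.cons_prefix_cons.mp huv with ⟨rfl, h2⟩
        right; left; exact ⟨u', T₁.prefixClosed hw h2, rfl⟩
    · rcases u with _ | ⟨b, u'⟩
      · left; rfl
      · rcases List.cons_prefix_cons.mp huv with ⟨rfl, h2⟩
        right; right; exact ⟨u', T₂.prefixClosed hw h2, rfl⟩

@[simp] lemma mem_brTree_dom {q : Q} {T₁ T₂ : BTree Q} {v : List Bool} :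
    v ∈ (brTree q T₁ T₂).dom ↔
      v = [] ∨ (∃ u ∈ T₁.dom, v = false :: u) ∨ (∃ u ∈ T₂.dom, v = true :: u) := by
  simp [brTree, Set.mem_insert_iff, Set.mem_image, Set.mem_union, eq_comm, and_comm]

lemma brTree_isLeaf_iff_left {q : Q} {T₁ T₂ : BTree Q} {w : List Bool} :
    (brTree q T₁ T₂).IsLeaf (false :: w) ↔ T₁.IsLeaf w := by
  constructor
  · rintro ⟨hm, hc⟩
    rcases mem_brTree_dom.mp hm with h | ⟨u, hu, hu'⟩ | ⟨u, hu, hu'⟩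
    · exact absurd h (by simp)
    · obtain rfl : w = u := by simpa using hu'
      refine ⟨hu, fun b hb => hc b ?_⟩
      exact mem_brTree_dom.mpr (Or.inr (Or.inl ⟨w ++ [b], hb, rfl⟩))
    · simp at hu'
  · rintro ⟨hm, hc⟩
    refine ⟨mem_brTree_dom.mpr (Or.inr (Or.inl ⟨w, hm, rfl⟩)), fun b hb => ?_⟩
    rcases mem_brTree_dom.mp hb with h | ⟨u, hu, hu'⟩ | ⟨u, hu, hu'⟩
    · exact absurd h (by simp)
    · obtain rfl : w ++ [b] = u := by simpa using hu'
      exact hc b hu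
    · simp at hu'

lemma brTree_isLeaf_iff_right {q : Q} {T₁ T₂ : BTree Q} {w : List Bool} :
    (brTree q T₁ T₂).IsLeaf (true :: w) ↔ T₂.IsLeaf w := by
  constructor
  · rintro ⟨hm, hc⟩
    rcases mem_brTree_dom.mp hm with h | ⟨u, hu, hu'⟩ | ⟨u, hu, hu'⟩
    · exact absurd h (by simp)
    · simp at hu'
    · obtain rfl : w = u := by simpa using hu'
      refine ⟨hu, fun b hb => hc b ?_⟩
      exact mem_brTree_dom.mpr (Or.inr (Or.inr ⟨w ++ [b], hb, rfl⟩))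
  · rintro ⟨hm, hc⟩
    refine ⟨mem_brTree_dom.mpr (Or.inr (Or.inr ⟨w, hm, rfl⟩)), fun b hb => ?_⟩
    rcases mem_brTree_dom.mp hb with h | ⟨u, hu, hu'⟩ | ⟨u, hu, hu'⟩
    · exact absurd h (by simp)
    · simp at hu'
    · obtain rfl : w ++ [b] = u := by simpa using hu'
      exact hc b hu

lemma brTree_isRT {B : BVASS1 Q} {T₁ T₂ : BTree Q} {q : Q}
    (hT₁ : B.IsRT T₁) (hT₂ : B.IsRT T₂) (hbr : B.br q (T₁.state []) (T₂.state [])) :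
    B.IsRT (brTree q T₁ T₂) := by
  have hst1 : ∀ u, (brTree q T₁ T₂).state (false :: u) = T₁.state u := fun u => rfl
  have hct1 : ∀ u, (brTree q T₁ T₂).counter (false :: u) = T₁.counter u := fun u => rfl
  have hst2 : ∀ u, (brTree q T₁ T₂).state (true :: u) = T₂.state u := fun u => rfl
  have hct2 : ∀ u, (brTree q T₁ T₂).counter (true :: u) = T₂.counter u := fun u => rfl
  constructor
  · intro u hu hnl
    rcases mem_brTree_dom.mp hu with rfl | ⟨w, hw, rfl⟩ | ⟨w, hw, rfl⟩
    · left
      exact ⟨mem_brTree_dom.mpr (Or.inr (Or.inl ⟨[], T₁.root_mem, rfl⟩)),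
             mem_brTree_dom.mpr (Or.inr (Or.inr ⟨[], T₂.root_mem, rfl⟩)), hbr, rfl⟩
    · have hnl' : ¬ T₁.IsLeaf w := fun h => hnl (brTree_isLeaf_iff_left.mpr h)
      rcases hT₁.1 w hw hnl' with ⟨h1, h2, h3, h4⟩ | ⟨h1, h2, z', h3, h4⟩
      · left
        refine ⟨mem_brTree_dom.mpr (Or.inr (Or.inl ⟨w ++ [false], h1, rfl⟩)),
                mem_brTree_dom.mpr (Or.inr (Or.inl ⟨w ++ [true], h2, rfl⟩)), ?_, ?_⟩
        · simpa [hst1] using h3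
        · simpa [hct1] using h4
      · right
        refine ⟨mem_brTree_dom.mpr (Or.inr (Or.inl ⟨w ++ [false], h1, rfl⟩)), ?_, z', ?_, ?_⟩
        · intro hmem
          rcases mem_brTree_dom.mp hmem with h | ⟨u, hu', he⟩ | ⟨u, hu', he⟩
          · simp at h
          · obtain rfl : w ++ [true] = u := by simpa using he
            exact h2 hu'
          · simp at he
        · simpa [hst1] using h3
        · simpa [hct1] using h4
    · have hnl' : ¬ T₂.IsLeaf w := fun h => hnl (brTree_isLeaf_iff_right.mpr h)
      rcases hT₂.1 w hw hnl' with ⟨h1, h2, h3, h4⟩ | ⟨h1, h2, z', h3, h4⟩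
      · left
        refine ⟨mem_brTree_dom.mpr (Or.inr (Or.inr ⟨w ++ [false], h1, rfl⟩)),
                mem_brTree_dom.mpr (Or.inr (Or.inr ⟨w ++ [true], h2, rfl⟩)), ?_, ?_⟩
        · simpa [hst2] using h3
        · simpa [hct2] using h4
      · right
        refine ⟨mem_brTree_dom.mpr (Or.inr (Or.inr ⟨w ++ [false], h1, rfl⟩)), ?_, z', ?_, ?_⟩
        · intro hmem
          rcases mem_brTree_dom.mp hmem with h | ⟨u, hu', he⟩ | ⟨u, hu', he⟩
          · simp at h
          · simp at he
          · obtain rfl : w ++ [true] = u := by simpa using he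
            exact h2 hu'
        · simpa [hst2] using h3
        · simpa [hct2] using h4
  · intro u hul
    have hu := hul.1
    rcases mem_brTree_dom.mp hu with rfl | ⟨w, hw, rfl⟩ | ⟨w, hw, rfl⟩
    · exfalso
      exact hul.2 false (mem_brTree_dom.mpr (Or.inr (Or.inl ⟨[], T₁.root_mem, rfl⟩)))
    · exact hT₁.2 w (brTree_isLeaf_iff_left.mp hul)
    · exact hT₂.2 w (brTree_isLeaf_iff_right.mp hul)

/-- Reach implies tree reachability -/
lemma Reach.reachable {B : BVASS1 Q} {q : Q} {n : ℕ} (h : B.Reach q n) : B.Reachable q n := by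
  induction h with
  | @final q hq => exact ⟨leafTree q, (leafTree_isRT B q hq).1, rfl⟩
  | @un q z p n n' hun _ heq ih =>
      obtain ⟨T, hT, hlab⟩ := ih
      have hst : T.state [] = p := by simp [BTree.state, hlab]
      have hct : T.counter [] = n' := by simp [BTree.counter, hlab]
      refine ⟨consTree q n T, consTree_isRT hT (hst ▸ hun) (by rw [hct]; exact heq), rfl⟩
  | @br q a b m m' hbr _ _ ih1 ih2 =>
      obtain ⟨T₁, hT₁, hlab₁⟩ := ih1
      obtain ⟨T₂, hT₂, hlab₂⟩ := ih2
      have hst₁ : T₁.state [] = a := by simp [BTree.state, hlab₁]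
      have hst₂ : T₂.state [] = b := by simp [BTree.state, hlab₂]
      have hct₁ : T₁.counter [] = m := by simp [BTree.counter, hlab₁]
      have hct₂ : T₂.counter [] = m' := by simp [BTree.counter, hlab₂]
      refine ⟨brTree q T₁ T₂, brTree_isRT hT₁ hT₂ (by rw [hst₁, hst₂]; exact hbr), ?_⟩
      show (q, T₁.counter [] + T₂.counter []) = (q, m + m')
      rw [hct₁, hct₂]

end BVASS1
end Dev3
section Dev4
namespace BVASS1

variable {Q : Type}

lemma subtree_isLeaf_iff {T : BTree Q} {u : List Bool} {hu : u ∈ T.dom} {x : List Bool} :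
    (T.subtree u hu).IsLeaf x ↔ T.IsLeaf (u ++ x) := by
  unfold BTree.IsLeaf BTree.subtree
  simp only [Set.mem_setOf_eq, List.append_assoc]

lemma subtree_isRT {B : BVASS1 Q} {T : BTree Q} {u : List Bool} (hu : u ∈ T.dom)
    (hT : B.IsRT T) : B.IsRT (T.subtree u hu) := by
  have hst : ∀ x, (T.subtree u hu).state x = T.state (u ++ x) := fun _ => rfl
  have hct : ∀ x, (T.subtree u hu).counter x = T.counter (u ++ x) := fun _ => rfl
  have hmem : ∀ x, x ∈ (T.subtree u hu).dom ↔ u ++ x ∈ T.dom := fun _ => Iff.rfl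
  constructor
  · intro x hx hnl
    have hnl' : ¬ T.IsLeaf (u ++ x) := fun h => hnl (subtree_isLeaf_iff.mpr h)
    rcases hT.1 (u ++ x) ((hmem x).mp hx) hnl' with ⟨h1, h2, h3, h4⟩ | ⟨h1, h2, z, h3, h4⟩
    · left
      refine ⟨?_, ?_, ?_, ?_⟩
      · rw [hmem, ← List.append_assoc]; exact h1
      · rw [hmem, ← List.append_assoc]; exact h2
      · rw [hst, hst, hst, ← List.append_assoc, ← List.append_assoc]; exact h3
      · rw [hct, hct, hct, ← List.append_assoc, ← List.append_assoc]; exact h4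
    · right
      refine ⟨?_, ?_, z, ?_, ?_⟩
      · rw [hmem, ← List.append_assoc]; exact h1
      · rw [hmem, ← List.append_assoc]; exact h2
      · rw [hst, hst, ← List.append_assoc]; exact h3
      · rw [hct, hct, ← List.append_assoc]; exact h4
  · intro x hx
    have := hT.2 (u ++ x) (subtree_isLeaf_iff.mp hx)
    rw [hst, hct]
    exact this

lemma subtree_ncard_lt {T : BTree Q} {b : Bool} (hb : [b] ∈ T.dom) :
    (T.subtree [b] hb).dom.ncard < T.dom.ncard := by
  have hinj : Function.Injective (fun x : List Bool => b :: x) := by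
    intro x y h; simpa using h
  have h1 : (T.subtree [b] hb).dom.ncard = ((fun x => b :: x) '' (T.subtree [b] hb).dom).ncard :=
    (Set.ncard_image_of_injective _ hinj).symm
  have h2 : (fun x => b :: x) '' (T.subtree [b] hb).dom ⊆ T.dom \ {[]} := by
    rintro _ ⟨x, hx, rfl⟩
    exact ⟨hx, by simp⟩
  calc (T.subtree [b] hb).dom.ncard
      = ((fun x => b :: x) '' (T.subtree [b] hb).dom).ncard := h1
    _ ≤ (T.dom \ {[]}).ncard := Set.ncard_le_ncard h2 (T.finite.diff)
    _ < T.dom.ncard := Set.ncard_diff_singleton_lt_of_mem T.root_mem T.finite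

lemma isRT_reach {B : BVASS1 Q} : ∀ (N : ℕ) (T : BTree Q), T.dom.ncard ≤ N →
    B.IsRT T → B.Reach (T.state []) (T.counter []) := by
  intro N
  induction N with
  | zero =>
      intro T hcard _
      exfalso
      have : 0 < T.dom.ncard := (Set.ncard_pos T.finite).mpr ⟨[], T.root_mem⟩
      omega
  | succ N ih =>
      intro T hcard hT
      by_cases hleaf : T.IsLeaf []
      · obtain ⟨hf, hc⟩ := hT.2 [] hleaf
        rw [hc]
        exact Reach.final hf
      · rcases hT.1 [] T.root_mem hleaf with ⟨h1, h2, h3, h4⟩ | ⟨h1, h2, z, h3, h4⟩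
        · -- branching at root
          simp only [List.nil_append] at h1 h2 h3 h4
          have r1 := ih (T.subtree [false] h1)
            (by have := subtree_ncard_lt h1; omega) (subtree_isRT h1 hT)
          have r2 := ih (T.subtree [true] h2)
            (by have := subtree_ncard_lt h2; omega) (subtree_isRT h2 hT)
          have e1 : (T.subtree [false] h1).state [] = T.state [false] := by
            show T.state ([false] ++ []) = _; rw [List.append_nil]
          have e1' : (T.subtree [false] h1).counter [] = T.counter [false] := by
            show T.counter ([false] ++ []) = _; rw [List.append_nil]
          have e2 : (T.subtree [true] h2).state [] = T.state [true] := by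
            show T.state ([true] ++ []) = _; rw [List.append_nil]
          have e2' : (T.subtree [true] h2).counter [] = T.counter [true] := by
            show T.counter ([true] ++ []) = _; rw [List.append_nil]
          rw [e1, e1'] at r1
          rw [e2, e2'] at r2
          rw [h4]
          exact Reach.br h3 r1 r2
        · -- unary at root
          simp only [List.nil_append] at h1 h2 h3 h4
          have r1 := ih (T.subtree [false] h1)
            (by have := subtree_ncard_lt h1; omega) (subtree_isRT h1 hT)
          have e1 : (T.subtree [false] h1).state [] = T.state [false] := by
            show T.state ([false] ++ []) = _; rw [List.append_nil]
          have e1' : (T.subtree [false] h1).counter [] = T.counter [false] := by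
            show T.counter ([false] ++ []) = _; rw [List.append_nil]
          rw [e1, e1'] at r1
          exact Reach.un h3 r1 h4

lemma reachable_iff_reach {B : BVASS1 Q} {q : Q} {n : ℕ} :
    B.Reachable q n ↔ B.Reach q n := by
  constructor
  · rintro ⟨T, hT, hlab⟩
    have hst : T.state [] = q := by simp [BTree.state, hlab]
    have hct : T.counter [] = n := by simp [BTree.counter, hlab]
    rw [← hst, ← hct]
    exact isRT_reach T.dom.ncard T le_rfl hT
  · exact Reach.reachable

end BVASS1
end Dev4
section Dev5
namespace BVASS1

variable {Q : Type}

lemma pump [Fintype Q] (B : BVASS1 Q) (p₀ : Q) (k : ℕ) (p : ℕ → Q) (t : ℕ → BTrans Q) (j : ℕ)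
    (ns : ℕ → ℕ)
    (hjk : j < k) (hp0 : p 0 = p₀)
    (hsteps : ∀ i, 1 ≤ i → i ≤ k → (t i).mem B ∧ (t i).src = p (i - 1) ∧ p i ∈ (t i).tgts)
    (hpk : p k = p j)
    (hcov : ∀ i, 1 ≤ i → i ≤ k → ∀ q ∈ (t i).tgts, B.Coverable q 0)
    (hns : ∀ i, j < i → i ≤ k →
      ns i ≤ Fintype.card Q + 1 ∧
      (∀ q z p', t i = .un q z p' → ns i = 0) ∧
      (∀ q a b, t i = .br q a b →
        ∃ p', ((a = p i ∧ p' = b) ∨ (b = p i ∧ p' = a)) ∧ B.Coverable p' (ns i)))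
    (hsum : (∑ i ∈ Finset.Icc (j + 1) k, (t i).eff) < ∑ i ∈ Finset.Icc (j + 1) k, (ns i : ℤ)) :
    (B.reachSet p₀).Infinite := by
  classical
  -- choose side-branch cover values
  have Hm : ∀ i : ℕ, ∃ m : ℕ, 1 ≤ i → i ≤ k →
      ((j < i → (ns i : ℤ) ≤ m) ∧
       ∀ x : ℕ, B.Reach (p i) x → ∀ y : ℕ,
         (y : ℤ) = (x : ℤ) + m - (t i).eff → B.Reach (p (i-1)) y) := by
    intro i
    by_cases h1i : 1 ≤ i ∧ i ≤ k
    · obtain ⟨hmem, hsrc, htgt⟩ := hsteps i h1i.1 h1i.2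
      cases ht : t i with
      | un q z p' =>
          rw [ht] at hmem hsrc htgt
          have hpi : p i = p' := by simpa [BTrans.tgts] using htgt
          refine ⟨0, fun _ _ => ⟨fun hji => ?_, fun x hx y hy => ?_⟩⟩
          · have := (hns i hji h1i.2).2.1 q z p' ht
            simp [this]
          · have hun : B.un (p (i-1)) z (p i) := by
              rw [← hsrc, hpi]; exact hmem
            refine Reach.un hun hx ?_
            simp only [BTrans.eff] at hy
            omega
      | br q a b =>
          rw [ht] at hmem hsrc htgt
          have htgt' : p i = a ∨ p i = b := by simpa [BTrans.tgts] using htgt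
          have hUP : ∀ mm : ℕ, (p i = a ∧ B.Reach b mm) ∨ (p i = b ∧ B.Reach a mm) →
              ∀ x : ℕ, B.Reach (p i) x → ∀ y : ℕ,
                (y : ℤ) = (x : ℤ) + mm - (BTrans.br q a b).eff → B.Reach (p (i-1)) y := by
            intro mm hside x hx y hy
            simp only [BTrans.eff] at hy
            have hy' : y = x + mm := by omega
            have hbr : B.br (p (i-1)) a b := by rw [← hsrc]; exact hmem
            rcases hside with ⟨hpa, hrb⟩ | ⟨hpb, hra⟩
            · rw [hpa] at hx
              rw [hy']
              exact Reach.br hbr hx hrb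
            · rw [hpb] at hx
              have := Reach.br hbr hra hx
              rw [hy', Nat.add_comm]
              exact this
          by_cases hji : j < i
          · obtain ⟨p', hp'or, hcover⟩ := (hns i hji h1i.2).2.2 q a b ht
            obtain ⟨mm, hmm, hre⟩ := hcover
            have hre' : B.Reach p' mm := reachable_iff_reach.mp hre
            refine ⟨mm, fun _ _ => ⟨fun _ => by exact_mod_cast hmm, hUP mm ?_⟩⟩
            rcases hp'or with ⟨ha, rfl⟩ | ⟨hb, rfl⟩
            · exact Or.inl ⟨ha.symm, hre'⟩
            · exact Or.inr ⟨hb.symm, hre'⟩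
          · rcases htgt' with hpa | hpb
            · have hcb : B.Coverable b 0 := hcov i h1i.1 h1i.2 b (by rw [ht]; simp [BTrans.tgts])
              obtain ⟨mm, _, hre⟩ := hcb
              exact ⟨mm, fun _ _ => ⟨fun h => absurd h hji, hUP mm
                (Or.inl ⟨hpa, reachable_iff_reach.mp hre⟩)⟩⟩
            · have hca : B.Coverable a 0 := hcov i h1i.1 h1i.2 a (by rw [ht]; simp [BTrans.tgts])
              obtain ⟨mm, _, hre⟩ := hca
              exact ⟨mm, fun _ _ => ⟨fun h => absurd h hji, hUP mm
                (Or.inr ⟨hpb, reachable_iff_reach.mp hre⟩)⟩⟩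
    · exact ⟨0, fun h1 h2 => absurd ⟨h1, h2⟩ h1i⟩
  choose m hm using Hm
  -- the cumulative gain function
  set A : ℕ → ℤ := fun i => ∑ l ∈ Finset.Ioc 0 i, ((m l : ℤ) - (t l).eff) with hA
  have hAdiff : ∀ a b : ℕ, a ≤ b → A b - A a = ∑ l ∈ Finset.Ioc a b, ((m l : ℤ) - (t l).eff) := by
    intro a b hab
    have h := Finset.sum_Ioc_consecutive (f := fun l => ((m l : ℤ) - (t l).eff))
      (Nat.zero_le a) hab
    simp only [hA]
    rw [← h]
    ring
  have hAsucc : ∀ b : ℕ, 1 ≤ b → A b - A (b-1) = (m b : ℤ) - (t b).eff := by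
    intro b hb
    rw [hAdiff (b-1) b (by omega)]
    have : Finset.Ioc (b-1) b = {b} := by
      ext x
      simp [Finset.mem_Ioc]
      omega
    rw [this, Finset.sum_singleton]
  -- climbing lemma
  have CL : ∀ (c a b : ℕ), a + c = b → b ≤ k → ∀ x : ℕ, B.Reach (p b) x →
      (∀ i, a ≤ i → i ≤ b → 0 ≤ (x:ℤ) + A b - A i) →
      ∀ y : ℕ, (y:ℤ) = (x:ℤ) + A b - A a → B.Reach (p a) y := by
    intro c
    induction c with
    | zero =>
        intro a b hab hbk x hx _ y hy
        obtain rfl : a = b := by omega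
        have : y = x := by omega
        rwa [this]
    | succ c ih =>
        intro a b hab hbk x hx hcond y hy
        have hb1 : 1 ≤ b := by omega
        have hcond1 := hcond (b-1) (by omega) (by omega)
        set x₁ : ℕ := ((x:ℤ) + A b - A (b-1)).toNat with hx₁
        have hx₁' : (x₁ : ℤ) = (x:ℤ) + A b - A (b-1) := Int.toNat_of_nonneg hcond1
        have hstep : B.Reach (p (b-1)) x₁ := by
          refine (hm b hb1 hbk).2 x hx x₁ ?_
          have h5 := hAsucc b hb1
          rw [hx₁']
          omega
        refine ih a (b-1) (by omega) (by omega) x₁ hstep ?_ y ?_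
        · intro i hai hib
          have := hcond i hai (by omega)
          omega
        · omega
  -- the per-loop gain
  have hmge : ∀ l, j < l → l ≤ k → (ns l : ℤ) ≤ m l := fun l h1 h2 => ((hm l (by omega) h2).1 h1)
  have hIoc : Finset.Icc (j+1) k = Finset.Ioc j k := by
    ext x
    simp [Finset.mem_Icc, Finset.mem_Ioc]
  have hd : 1 ≤ A k - A j := by
    rw [hAdiff j k (le_of_lt hjk)]
    rw [hIoc] at hsum
    have h1 : ∑ l ∈ Finset.Ioc j k, (ns l : ℤ) ≤ ∑ l ∈ Finset.Ioc j k, (m l : ℤ) := by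
      apply Finset.sum_le_sum
      intro l hl
      simp only [Finset.mem_Ioc] at hl
      exact hmge l hl.1 hl.2
    have h2 : ∑ l ∈ Finset.Ioc j k, ((m l : ℤ) - (t l).eff)
        = (∑ l ∈ Finset.Ioc j k, (m l : ℤ)) - ∑ l ∈ Finset.Ioc j k, (t l).eff := by
      rw [Finset.sum_sub_distrib]
    omega
  set dn : ℕ := (A k - A j).toNat with hdn
  have hdn' : (dn : ℤ) = A k - A j := Int.toNat_of_nonneg (by omega)
  -- max over the loop range
  obtain ⟨imax, himax, himax'⟩ := Finset.exists_max_image (Finset.Icc j k) A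
    ⟨j, by simp [Finset.mem_Icc]; omega⟩
  simp only [Finset.mem_Icc] at himax
  have hAmax : ∀ i, j ≤ i → i ≤ k → A i ≤ A imax := by
    intro i h1 h2
    exact himax' i (by simp [Finset.mem_Icc]; omega)
  -- base value at p imax
  have hbase : ∃ w : ℕ, B.Reach (p imax) w := by
    by_cases h : imax = j
    · have : B.Coverable (p k) 0 := by
        have hk1 : 1 ≤ k := by omega
        exact hcov k hk1 le_rfl (p k) (hsteps k hk1 le_rfl).2.2
      obtain ⟨w, _, hw⟩ := this
      exact ⟨w, by rw [h, ← hpk]; exact reachable_iff_reach.mp hw⟩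
    · have h1 : 1 ≤ imax := by omega
      have : B.Coverable (p imax) 0 :=
        hcov imax h1 himax.2 (p imax) (hsteps imax h1 himax.2).2.2
      obtain ⟨w, _, hw⟩ := this
      exact ⟨w, reachable_iff_reach.mp hw⟩
  obtain ⟨w, hw⟩ := hbase
  -- climb from imax to j
  have hy₀nn : (0:ℤ) ≤ (w:ℤ) + A imax - A j := by
    have := hAmax j le_rfl (le_of_lt hjk)
    omega
  set y₀ : ℕ := ((w:ℤ) + A imax - A j).toNat with hy₀
  have hy₀' : (y₀ : ℤ) = (w:ℤ) + A imax - A j := Int.toNat_of_nonneg hy₀nn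
  have hreachy₀ : B.Reach (p j) y₀ := by
    refine CL (imax - j) j imax (by omega) himax.2 w hw ?_ y₀ (by rw [hy₀'])
    intro i h1 h2
    have := hAmax i h1 (by omega)
    omega
  -- loop
  have hloop : ∀ L : ℕ, B.Reach (p j) (y₀ + L * dn) := by
    intro L
    induction L with
    | zero => simpa using hreachy₀
    | succ L ihL =>
        have hx : B.Reach (p k) (y₀ + L * dn) := by rw [hpk]; exact ihL
        refine CL (k - j) j k (by omega) le_rfl (y₀ + L * dn) hx ?_ (y₀ + (L+1) * dn) ?_
        · intro i h1 h2
          have h3 := hAmax i h1 h2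
          omega
        · have heq : (L+1) * dn = L * dn + dn := by ring
          rw [heq]
          omega
  -- prefix climb to the root
  obtain ⟨i₂, hi₂, hi₂'⟩ := Finset.exists_max_image (Finset.Icc 0 j) A
    ⟨0, by simp⟩
  simp only [Finset.mem_Icc] at hi₂
  have hA0 : A 0 = 0 := by simp [hA]
  set L₀ : ℕ := (A i₂ - A j).toNat with hL₀
  have hprefix : ∀ L : ℕ, B.Reach (p 0) ((((y₀ + (L₀ + L) * dn) : ℕ) + A j).toNat) := by
    intro L
    have hx := hloop (L₀ + L)
    set x : ℕ := y₀ + (L₀ + L) * dn with hxdef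
    have hdnpos : 0 < dn := by omega
    have hxge0 : L₀ ≤ (L₀ + L) * dn :=
      le_trans (Nat.le_mul_of_pos_right _ hdnpos)
        (Nat.mul_le_mul_right dn (Nat.le_add_right _ _))
    have hxge : (L₀ : ℤ) ≤ (x : ℤ) := by
      have := hxge0
      simp only [hxdef]
      omega
    have hcnd : ∀ i, 0 ≤ i → i ≤ j → 0 ≤ (x:ℤ) + A j - A i := by
      intro i h1 h2
      have h3 : A i ≤ A i₂ := hi₂' i (by simp [Finset.mem_Icc]; omega)
      have h4 : A i₂ - A j ≤ L₀ := Int.self_le_toNat _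
      omega
    have hnn : (0:ℤ) ≤ (x:ℤ) + A j := by
      have := hcnd 0 le_rfl (Nat.zero_le j)
      rw [hA0] at this
      omega
    refine CL j 0 j (by omega) (le_of_lt hjk) x hx hcnd _ ?_
    rw [Int.toNat_of_nonneg hnn, hA0]
    ring
  -- conclude infinitude
  have hnnL : ∀ L : ℕ, (0:ℤ) ≤ ((y₀ + (L₀ + L) * dn : ℕ) : ℤ) + A j := by
    intro L
    have h3 : A 0 ≤ A i₂ := hi₂' 0 (by simp)
    have h4 : A i₂ - A j ≤ L₀ := Int.self_le_toNat _
    have hdnpos : 0 < dn := by omega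
    have hxge0 : L₀ ≤ (L₀ + L) * dn :=
      le_trans (Nat.le_mul_of_pos_right _ hdnpos)
        (Nat.mul_le_mul_right dn (Nat.le_add_right _ _))
    rw [hA0] at h3
    omega
  have hmono : StrictMono (fun L => ((((y₀ + (L₀ + L) * dn) : ℕ) : ℤ) + A j).toNat) := by
    apply strictMono_nat_of_lt_succ
    intro L
    have heq : (L₀ + (L + 1)) * dn = (L₀ + L) * dn + dn := by ring
    have h1 := hnnL L
    simp only [heq]
    omega
  apply Set.infinite_of_injective_forall_mem
    (f := fun L => ((((y₀ + (L₀ + L) * dn) : ℕ) : ℤ) + A j).toNat) hmono.injective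
  intro L
  show B.Reachable p₀ _
  rw [← hp0]
  exact (hprefix L).reachable

end BVASS1
end Dev5
section Dev6
namespace BVASS1

variable {Q : Type}

/-- A recorded derivation step. -/
structure RStep (Q : Type) where
  q : Q
  t : BTrans Q
  q' : Q
  side : ℕ
  n : ℕ
  n' : ℕ

def RStep.wt (s : RStep Q) : ℤ := s.t.eff - s.side

def RStep.Valid (B : BVASS1 Q) (s : RStep Q) : Prop :=
  s.t.mem B ∧ s.t.src = s.q ∧ s.q' ∈ s.t.tgts ∧
  (s.n' : ℤ) = (s.n : ℤ) + s.t.eff - s.side ∧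
  s.n ≤ 2 * s.n' + 1 ∧
  B.Reach s.q' s.n' ∧
  (∀ q z p', s.t = .un q z p' → s.side = 0) ∧
  (∀ q a b, s.t = .br q a b →
    ∃ p', ((a = s.q' ∧ p' = b) ∨ (b = s.q' ∧ p' = a)) ∧ B.Reach p' s.side)

def Chained : (Q × ℕ) → List (RStep Q) → (Q × ℕ) → Prop
  | x, [], y => x = y
  | x, s :: l, y => s.q = x.1 ∧ s.n = x.2 ∧ Chained (s.q', s.n') l y

def Linked : Q → List (RStep Q) → Q → Prop
  | x, [], y => x = y
  | x, s :: l, y => s.q = x ∧ Linked s.q' l y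

lemma chained_append {x z : Q × ℕ} {l₁ l₂ : List (RStep Q)} :
    Chained x (l₁ ++ l₂) z ↔ ∃ y, Chained x l₁ y ∧ Chained y l₂ z := by
  induction l₁ generalizing x with
  | nil =>
      simp only [List.nil_append]
      constructor
      · intro h; exact ⟨x, rfl, h⟩
      · rintro ⟨y, rfl, h⟩; exact h
  | cons s l ih =>
      simp only [List.cons_append, Chained, List.append_eq]
      rw [ih]
      tauto

lemma linked_append {x z : Q} {l₁ l₂ : List (RStep Q)} :
    Linked x (l₁ ++ l₂) z ↔ ∃ y, Linked x l₁ y ∧ Linked y l₂ z := by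
  induction l₁ generalizing x with
  | nil =>
      simp only [List.nil_append]
      constructor
      · intro h; exact ⟨x, rfl, h⟩
      · rintro ⟨y, rfl, h⟩; exact h
  | cons s l ih =>
      simp only [List.cons_append, Linked, List.append_eq]
      rw [ih]
      tauto

lemma chained_linked {x y : Q × ℕ} {l : List (RStep Q)} (h : Chained x l y) :
    Linked x.1 l y.1 := by
  induction l generalizing x with
  | nil => rw [h]; rfl
  | cons s l ih => exact ⟨h.1, ih h.2.2⟩

lemma chained_unique {x y y' : Q × ℕ} {l : List (RStep Q)} (h : Chained x l y)
    (h' : Chained x l y') : y = y' := by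
  induction l generalizing x with
  | nil => rw [← h, ← h']
  | cons s l ih => exact ih h.2.2 h'.2.2

lemma chained_wt {B : BVASS1 Q} {x y : Q × ℕ} {l : List (RStep Q)}
    (hv : ∀ s ∈ l, s.Valid B) (h : Chained x l y) :
    (y.2 : ℤ) = (x.2 : ℤ) + (l.map RStep.wt).sum := by
  induction l generalizing x with
  | nil => rw [h]; simp
  | cons s l ih =>
      obtain ⟨h1, h2, h3⟩ := h
      have hs := (hv s (by simp)).2.2.2.1
      have := ih (fun u hu => hv u (by simp [hu])) h3
      simp only [List.map_cons, List.sum_cons]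
      rw [this]
      simp only [RStep.wt]
      rw [← h2]
      omega

/-- extract a full max-descent chain from a reachability derivation -/
lemma exists_chain {B : BVASS1 Q} {q : Q} {n : ℕ} (h : B.Reach q n) :
    ∃ c : List (RStep Q), (∀ s ∈ c, s.Valid B) ∧ ∃ qf, Chained (q, n) c (qf, 0) := by
  induction h with
  | @final q hq => exact ⟨[], by simp, q, rfl⟩
  | @un q z p n n' hun hre heq ih =>
      obtain ⟨c, hc, qf, hch⟩ := ih
      have hz := B.un_small q z p hun
      refine ⟨⟨q, .un q z p, p, 0, n, n'⟩ :: c, ?_, qf, rfl, rfl, hch⟩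
      intro s hs
      rcases List.mem_cons.mp hs with rfl | hs
      ·
        refine ⟨hun, rfl, by simp [BTrans.tgts], ?_, ?_, hre, fun _ _ _ _ => rfl,
                fun q₂ a₂ b₂ hcontra => by simp at hcontra⟩
        · show (n' : ℤ) = (n : ℤ) + (BTrans.un q z p).eff - ((0:ℕ) : ℤ)
          simp only [BTrans.eff]
          omega
        · show n ≤ 2 * n' + 1
          omega
      · exact hc s hs
  | @br q a b m m' hbr hra hrb iha ihb =>
      rcases le_or_gt m' m with hle | hlt
      · obtain ⟨c, hc, qf, hch⟩ := iha
        refine ⟨⟨q, .br q a b, a, m', m + m', m⟩ :: c, ?_, qf, rfl, rfl, hch⟩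
        intro s hs
        rcases List.mem_cons.mp hs with rfl | hs
        ·
          refine ⟨hbr, rfl, by simp [BTrans.tgts], ?_, ?_, hra,
                  fun _ _ _ hcontra => by simp at hcontra, ?_⟩
          · show (m : ℤ) = ((m + m' : ℕ) : ℤ) + (BTrans.br q a b).eff - ((m' : ℕ) : ℤ)
            simp only [BTrans.eff]
            push_cast
            ring
          · show m + m' ≤ 2 * m + 1
            omega
          · intro q₂ a₂ b₂ heq2
            injection heq2 with h1 h2 h3
            subst h2
            subst h3
            exact ⟨_, Or.inl ⟨rfl, rfl⟩, hrb⟩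
        · exact hc s hs
      · obtain ⟨c, hc, qf, hch⟩ := ihb
        refine ⟨⟨q, .br q a b, b, m, m + m', m'⟩ :: c, ?_, qf, rfl, rfl, hch⟩
        intro s hs
        rcases List.mem_cons.mp hs with rfl | hs
        ·
          refine ⟨hbr, rfl, by simp [BTrans.tgts], ?_, ?_, hrb,
                  fun _ _ _ hcontra => by simp at hcontra, ?_⟩
          · show (m' : ℤ) = ((m + m' : ℕ) : ℤ) + (BTrans.br q a b).eff - ((m : ℕ) : ℤ)
            simp only [BTrans.eff]
            push_cast
            ring
          · show m + m' ≤ 2 * m' + 1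
            omega
          · intro q₂ a₂ b₂ heq2
            injection heq2 with h1 h2 h3
            subst h2
            subst h3
            exact ⟨_, Or.inr ⟨rfl, rfl⟩, hra⟩
        · exact hc s hs

end BVASS1
end Dev6
section Dev7
namespace BVASS1

variable {Q : Type}

def ptf (d : RStep Q) (c : List (RStep Q)) (e : Q × ℕ) (i : ℕ) : Q × ℕ :=
  if i < c.length then ((c.getD i d).q, (c.getD i d).n) else e

lemma ptf_lt {d : RStep Q} {c : List (RStep Q)} {e : Q × ℕ} {i : ℕ} (h : i < c.length) :
    ptf d c e i = ((c.getD i d).q, (c.getD i d).n) := if_pos h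

lemma ptf_ge {d : RStep Q} {c : List (RStep Q)} {e : Q × ℕ} {i : ℕ} (h : c.length ≤ i) :
    ptf d c e i = e := if_neg (by omega)

lemma chained_ptf {d : RStep Q} {c : List (RStep Q)} {x e : Q × ℕ} (h : Chained x c e) :
    ∀ i, i ≤ c.length → Chained x (c.take i) (ptf d c e i) ∧
      Chained (ptf d c e i) (c.drop i) e := by
  induction c generalizing x with
  | nil =>
      intro i hi
      obtain rfl : i = 0 := by simpa using hi
      rw [ptf_ge (by simp)]
      simp only [List.take_nil, List.drop_nil]
      exact ⟨h, rfl⟩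
  | cons s l ih =>
      intro i hi
      cases i with
      | zero =>
          rw [ptf_lt (by simp)]
          simp only [List.getD_cons_zero, List.take_zero, List.drop_zero]
          obtain ⟨h1, h2, h3⟩ := h
          constructor
          · show x = (s.q, s.n)
            rw [h1, h2]
          · exact ⟨rfl, rfl, h3⟩
      | succ i =>
          obtain ⟨h1, h2, h3⟩ := h
          have hii : i ≤ l.length := by simpa using hi
          have hptf : ptf d (s :: l) e (i+1) = ptf d l e i := by
            unfold ptf
            simp only [List.length_cons, List.getD_cons_succ]
            by_cases hc : i < l.length
            · rw [if_pos (by omega), if_pos hc]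
            · rw [if_neg (by omega), if_neg hc]
          rw [hptf]
          obtain ⟨ht, hd2⟩ := ih h3 i hii
          exact ⟨⟨h1, h2, ht⟩, hd2⟩

lemma ptf_consec {d : RStep Q} {c : List (RStep Q)} {x e : Q × ℕ} (h : Chained x c e) :
    ∀ i, i < c.length → ptf d c e (i+1) = ((c.getD i d).q', (c.getD i d).n') := by
  induction c generalizing x with
  | nil => intro i hi; simp at hi
  | cons s l ih =>
      intro i hi
      obtain ⟨h1, h2, h3⟩ := h
      cases i with
      | zero =>
          simp only [List.getD_cons_zero]
          cases l with
          | nil =>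
              rw [ptf_ge (by simp)]
              exact h3.symm
          | cons s₂ l' =>
              rw [ptf_lt (by simp)]
              obtain ⟨g1, g2, _⟩ := h3
              simp only [List.getD_cons_succ, List.getD_cons_zero]
              rw [g1, g2]
      | succ i =>
          have hptf : ptf d (s :: l) e (i+1+1) = ptf d l e (i+1) := by
            unfold ptf
            simp only [List.length_cons, List.getD_cons_succ]
            by_cases hc : i + 1 < l.length
            · rw [if_pos (by omega), if_pos hc]
            · rw [if_neg (by omega), if_neg hc]
          rw [hptf, List.getD_cons_succ]
          exact ih h3 i (by simpa using hi)

/-- pigeonhole on halving-bounded descents -/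
lemma find_pair [Fintype Q] (v : ℕ → ℕ) (st : ℕ → Q) (L : ℕ)
    (hL : v L = 0) (hstep : ∀ i, i < L → v i ≤ 2 * v (i+1) + 1)
    (hbig : 2 ^ Fintype.card Q ≤ v 0) :
    ∃ a b, a < b ∧ b ≤ L ∧ st a = st b ∧ v b < v a := by
  classical
  set cQ := Fintype.card Q with hcQ
  have hex : ∀ t : ℕ, ∃ i, v i < 2 ^ t := fun t => ⟨L, by rw [hL]; positivity⟩
  set b : ℕ → ℕ := fun t => Nat.find (hex t) with hb
  have hspec : ∀ t, v (b t) < 2 ^ t := fun t => Nat.find_spec (hex t)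
  have hmin : ∀ t i, i < b t → 2 ^ t ≤ v i := by
    intro t i hi
    have := Nat.find_min (hex t) hi
    omega
  have hbL : ∀ t, b t ≤ L := fun t => Nat.find_min' (hex t) (by rw [hL]; positivity)
  have hb0 : ∀ t, t ≤ cQ → 0 < b t := by
    intro t ht
    rcases Nat.eq_zero_or_pos (b t) with h0 | h
    · exfalso
      have h1 := hspec t
      rw [h0] at h1
      have h2 : (2:ℕ) ^ t ≤ 2 ^ cQ := Nat.pow_le_pow_right (by norm_num) ht
      omega
    · exact h
  have hchain : ∀ t, t < cQ → b (t+1) < b t := by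
    intro t ht
    have hle : b (t+1) ≤ b t := Nat.find_min' (hex (t+1))
      (lt_trans (hspec t) (by have := Nat.pow_lt_pow_right (a := 2) (by norm_num) (Nat.lt_succ_self t); omega))
    rcases lt_or_eq_of_le hle with h | h
    · exact h
    · exfalso
      have hpos : 0 < b t := hb0 t (by omega)
      have h1 : 2 ^ (t+1) ≤ v (b t - 1) := by
        have : b t - 1 < b (t+1) := by omega
        exact hmin (t+1) _ this
      have h2 : v (b t - 1) ≤ 2 * v (b t) + 1 := by
        have hlt : b t - 1 < L := by
          have := hbL t
          omega
        have := hstep (b t - 1) hlt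
        have heq : b t - 1 + 1 = b t := by omega
        rwa [heq] at this
      have h3 := hspec t
      have h4 : (2:ℕ) ^ (t+1) = 2 * 2 ^ t := by ring
      omega
  have hanti : ∀ t', t' ≤ cQ → ∀ t, t < t' → b t' < b t := by
    intro t'
    induction t' with
    | zero => intro _ t ht; omega
    | succ u ihu =>
        intro hu t ht
        have h1 : b (u+1) < b u := hchain u (by omega)
        rcases Nat.lt_or_ge t u with h | h
        · exact lt_trans h1 (ihu (by omega) t h)
        · obtain rfl : t = u := by omega
          exact h1
  -- pigeonhole
  have hcard : (Finset.univ : Finset Q).card < (Finset.range (cQ + 1)).card := by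
    simp [hcQ]
  obtain ⟨t₁, ht₁, t₂, ht₂, hne, heq⟩ :=
    Finset.exists_ne_map_eq_of_card_lt_of_maps_to hcard
      (f := fun t => st (b t)) (fun a _ => Finset.mem_univ _)
  simp only [Finset.mem_range] at ht₁ ht₂
  -- order them
  rcases Nat.lt_or_ge t₁ t₂ with hlt | hge
  · refine ⟨b t₂, b t₁, hanti t₂ (by omega) t₁ hlt, hbL t₁, heq.symm, ?_⟩
    have h1 : 2 ^ (t₂ - 1) ≤ v (b t₂) := by
      have hlt2 : b t₂ < b (t₂ - 1) := hanti t₂ (by omega) (t₂ - 1) (by omega)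
      exact hmin (t₂ - 1) _ hlt2
    have h2 := hspec t₁
    have h3 : (2:ℕ) ^ t₁ ≤ 2 ^ (t₂ - 1) := Nat.pow_le_pow_right (by norm_num) (by omega)
    omega
  · have hlt : t₂ < t₁ := by omega
    refine ⟨b t₁, b t₂, hanti t₁ (by omega) t₂ hlt, hbL t₂, heq, ?_⟩
    have h1 : 2 ^ (t₁ - 1) ≤ v (b t₁) := by
      have hlt2 : b t₁ < b (t₁ - 1) := hanti t₁ (by omega) (t₁ - 1) (by omega)
      exact hmin (t₁ - 1) _ hlt2
    have h2 := hspec t₂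
    have h3 : (2:ℕ) ^ t₂ ≤ 2 ^ (t₁ - 1) := Nat.pow_le_pow_right (by norm_num) (by omega)
    omega

end BVASS1
end Dev7
section Dev8
namespace BVASS1

variable {Q : Type}

lemma linked_head {x y : Q} {s : RStep Q} {l : List (RStep Q)} (h : Linked x (s :: l) y) :
    s.q = x := h.1

lemma nodup_fail_indices {α β : Type*} (f : α → β) (l : List α) (h : ¬ (l.map f).Nodup) :
    ∃ (i j : ℕ) (hi : i < l.length) (hj : j < l.length), i < j ∧ f (l[i]'hi) = f (l[j]'hj) := by
  obtain ⟨x, hdup⟩ := List.exists_duplicate_iff_not_nodup.mpr h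
  rw [List.duplicate_iff_exists_distinct_get] at hdup
  obtain ⟨i', j', hij, hi'x, hj'x⟩ := hdup
  have hq0 : (l.map f).get i' = (l.map f).get j' := by rw [← hi'x, ← hj'x]
  have hin : (i' : ℕ) < l.length := by simpa using i'.isLt
  have hjn : (j' : ℕ) < l.length := by simpa using j'.isLt
  refine ⟨i', j', hin, hjn, hij, ?_⟩
  simpa [List.get_eq_getElem, List.getElem_map] using hq0

lemma extract_cycle [Fintype Q] :
    ∀ (N : ℕ) (l : List (RStep Q)) (q : Q), l.length ≤ N → Linked q l q →
      (l.map RStep.wt).sum < 0 →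
      ∃ (l₂ : List (RStep Q)) (q₂ : Q), l₂ ≠ [] ∧ Linked q₂ l₂ q₂ ∧ (∀ s ∈ l₂, s ∈ l) ∧
        (l₂.map RStep.wt).sum < 0 ∧ (l₂.map RStep.q).Nodup := by
  intro N
  induction N with
  | zero =>
      intro l q hlen _ hsum
      obtain rfl : l = [] := List.length_eq_zero_iff.mp (by omega)
      simp at hsum
  | succ N ih =>
      intro l q hlen hlink hsum
      by_cases hnd : (l.map RStep.q).Nodup
      · refine ⟨l, q, ?_, hlink, fun s hs => hs, hsum, hnd⟩
        intro hcon
        rw [hcon] at hsum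
        simp at hsum
      · obtain ⟨i, j, hin, hjn, hijlt, hqq⟩ := nodup_fail_indices RStep.q l hnd
        -- decompose
        set C : List (RStep Q) := (l.drop i).take (j - i) with hCdef
        have hdd : (l.drop i).drop (j - i) = l.drop j := by
          rw [List.drop_drop]
          congr 1
          omega
        have hCB : C ++ l.drop j = l.drop i := by
          rw [← hdd, hCdef]
          exact List.take_append_drop _ _
        have hl : l = l.take i ++ (C ++ l.drop j) := by
          rw [hCB, List.take_append_drop]
        -- C is nonempty with head l[i]
        have hdropi : l.drop i = (l[i]'hin) :: l.drop (i+1) := List.drop_eq_getElem_cons hin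
        have hCcons : ∃ C₀, C = (l[i]'hin) :: C₀ := by
          refine ⟨(l.drop (i+1)).take (j - i - 1), ?_⟩
          rw [hCdef, hdropi]
          have hk : j - i = (j - i - 1) + 1 := by omega
          conv_lhs => rw [hk]
          rw [List.take_succ_cons]
        have hdropj : l.drop j = (l[j]'hjn) :: l.drop (j+1) := List.drop_eq_getElem_cons hjn
        -- split the linking
        rw [hl] at hlink
        obtain ⟨m₁, hA, hrest⟩ := linked_append.mp hlink
        obtain ⟨m₂, hC, hB⟩ := linked_append.mp hrest
        obtain ⟨C₀, hCcons⟩ := hCcons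
        have hm₁ : (l[i]'hin).q = m₁ := by
          rw [hCcons] at hC
          exact linked_head hC
        have hm₂ : (l[j]'hjn).q = m₂ := by
          rw [hdropj] at hB
          exact linked_head hB
        have hm12 : m₁ = m₂ := by rw [← hm₁, ← hm₂, hqq]
        -- weight split
        have hsum' : ((l.take i).map RStep.wt).sum + ((C.map RStep.wt).sum
            + ((l.drop j).map RStep.wt).sum) = (l.map RStep.wt).sum := by
          conv_rhs => rw [hl]
          simp [List.map_append, List.sum_append]
        have hlenC : C.length = j - i := by
          rw [hCdef]
          rw [List.length_take, List.length_drop]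
          omega
        rcases lt_or_ge ((C.map RStep.wt).sum) 0 with hCneg | hCpos
        · -- recurse into C
          refine ?_
          have hres := ih C m₁ (by omega) (by rw [hm12] at hC ⊢; exact hC) hCneg
          obtain ⟨l₂, q₂, h1, h2, h3, h4, h5⟩ := hres
          refine ⟨l₂, q₂, h1, h2, fun s hs => ?_, h4, h5⟩
          have : s ∈ C := h3 s hs
          have : s ∈ l.drop i := by rw [← hCB]; exact List.mem_append_left _ this
          exact List.drop_subset _ _ this
        · -- recurse into A ++ B
          have hAB : Linked q (l.take i ++ l.drop j) q := by
            apply linked_append.mpr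
            exact ⟨m₁, hA, by rw [hm12]; exact hB⟩
          have hABsum : (((l.take i ++ l.drop j).map RStep.wt).sum) < 0 := by
            rw [List.map_append, List.sum_append]
            omega
          have hABlen : (l.take i ++ l.drop j).length ≤ N := by
            rw [List.length_append, List.length_take, List.length_drop]
            omega
          obtain ⟨l₂, q₂, h1, h2, h3, h4, h5⟩ := ih _ q hABlen hAB hABsum
          refine ⟨l₂, q₂, h1, h2, fun s hs => ?_, h4, h5⟩
          rcases List.mem_append.mp (h3 s hs) with h | h
          · exact List.take_subset _ _ h
          · exact List.drop_subset _ _ h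

lemma extract_prefix :
    ∀ (N : ℕ) (l : List (RStep Q)) (q₀ q : Q) (SC : Set Q), l.length ≤ N →
      Linked q₀ l q → q ∈ SC →
      ∃ (l' : List (RStep Q)) (qq : Q), (∀ s ∈ l', s ∈ l) ∧ qq ∈ SC ∧ Linked q₀ l' qq ∧
        (l'.map RStep.q).Nodup ∧ ∀ s ∈ l', s.q ∉ SC := by
  intro N
  induction N with
  | zero =>
      intro l q₀ q SC hlen hlink hq
      obtain rfl : l = [] := List.length_eq_zero_iff.mp (by omega)
      obtain rfl : q₀ = q := hlink
      exact ⟨[], q₀, by simp, hq, rfl, by simp, by simp⟩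
  | succ N ih =>
      intro l q₀ q SC hlen hlink hq
      by_cases h0 : q₀ ∈ SC
      · exact ⟨[], q₀, by simp, h0, rfl, by simp, by simp⟩
      · cases l with
        | nil =>
            obtain rfl : q₀ = q := hlink
            exact absurd hq h0
        | cons s rest =>
            obtain ⟨hsq, hrest⟩ := hlink
            obtain ⟨l'', qq, hmem, hqq, hlink'', hnd'', hnot''⟩ :=
              ih rest s.q' q SC (by simpa using hlen) hrest hq
            by_cases hmem0 : q₀ ∈ l''.map RStep.q
            · obtain ⟨s₂, hs₂mem, hs₂q⟩ := List.mem_map.mp hmem0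
              obtain ⟨X, Y, hXY⟩ := List.append_of_mem hs₂mem
              rw [hXY] at hlink''
              obtain ⟨m, hX, hsY⟩ := linked_append.mp hlink''
              have hmq : s₂.q = m := linked_head hsY
              have hlink2 : Linked q₀ (s₂ :: Y) qq := by
                rw [← hs₂q, hmq]
                exact hsY
              refine ⟨s₂ :: Y, qq, ?_, hqq, hlink2, ?_, ?_⟩
              · intro u hu
                have : u ∈ l'' := by rw [hXY]; exact List.mem_append_right _ hu
                exact List.mem_cons_of_mem _ (hmem u this)
              · have hsuf : (s₂ :: Y) <:+ l'' := ⟨X, hXY.symm⟩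
                exact (hnd''.sublist (hsuf.sublist.map _))
              · intro u hu
                apply hnot''
                rw [hXY]
                exact List.mem_append_right _ hu
            · refine ⟨s :: l'', qq, ?_, hqq, ⟨hsq, hlink''⟩, ?_, ?_⟩
              · intro u hu
                rcases List.mem_cons.mp hu with rfl | hu
                · exact List.mem_cons_self
                · exact List.mem_cons_of_mem _ (hmem u hu)
              · simp only [List.map_cons, List.nodup_cons]
                exact ⟨by rw [hsq]; exact hmem0, hnd''⟩
              · intro u hu
                rcases List.mem_cons.mp hu with rfl | hu
                · rw [hsq]; exact h0
                · exact hnot'' u hu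

lemma rotate_cycle {l₂ : List (RStep Q)} {q₂ qq : Q} (hL : Linked q₂ l₂ q₂)
    (hmem : qq ∈ l₂.map RStep.q) :
    ∃ C', Linked qq C' qq ∧ C'.Perm l₂ := by
  obtain ⟨s₂, hs₂mem, hs₂q⟩ := List.mem_map.mp hmem
  obtain ⟨X, Y, hXY⟩ := List.append_of_mem hs₂mem
  rw [hXY] at hL
  obtain ⟨m, hX, hsY⟩ := linked_append.mp hL
  have hmq : s₂.q = m := linked_head hsY
  refine ⟨(s₂ :: Y) ++ X, ?_, ?_⟩
  · apply linked_append.mpr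
    refine ⟨q₂, ?_, ?_⟩
    · rw [← hs₂q, hmq]; exact hsY
    · rw [← hs₂q, hmq]; exact hX
  · rw [hXY]
    exact List.perm_append_comm

end BVASS1
end Dev8
section Dev9
namespace BVASS1

variable {Q : Type}

lemma sum_range_getD (g : RStep Q → ℤ) (d : RStep Q) :
    ∀ (CL : List (RStep Q)), ∑ i ∈ Finset.range CL.length, g (CL.getD i d) = (CL.map g).sum := by
  intro CL
  induction CL with
  | nil => simp
  | cons s L ih =>
      simp only [List.length_cons, List.map_cons, List.sum_cons]
      rw [Finset.sum_range_succ']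
      simp only [List.getD_cons_succ, List.getD_cons_zero]
      rw [ih]
      ring

lemma sum_Icc_getD (g : RStep Q → ℤ) (d : RStep Q) (CL : List (RStep Q)) (j : ℕ) :
    ∑ i ∈ Finset.Icc (j+1) (j + CL.length), g (CL.getD (i - 1 - j) d) = (CL.map g).sum := by
  rw [← Finset.Ico_add_one_right_eq_Icc, Finset.sum_Ico_eq_sum_range]
  have h1 : j + CL.length + 1 - (j + 1) = CL.length := by omega
  rw [h1]
  rw [← sum_range_getD g d CL]
  apply Finset.sum_congr rfl
  intro i _
  have h2 : j + 1 + i - 1 - j = i := by omega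
  rw [h2]

lemma list_sum_sub (f g : RStep Q → ℤ) :
    ∀ (L : List (RStep Q)), (L.map (fun s => f s - g s)).sum = (L.map f).sum - (L.map g).sum := by
  intro L
  induction L with
  | nil => simp
  | cons s L ih => simp only [List.map_cons, List.sum_cons, ih]; ring

lemma linked_consec {x y : Q} (d : RStep Q) :
    ∀ (F : List (RStep Q)), Linked x F y →
      ∀ i, i + 1 < F.length → (F.getD (i+1) d).q = (F.getD i d).q' := by
  intro F
  induction F generalizing x with
  | nil => intro _ i hi; simp at hi
  | cons s l ih =>
      intro h i hi
      cases i with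
      | zero =>
          simp only [List.getD_cons_succ, List.getD_cons_zero]
          cases l with
          | nil => simp at hi
          | cons s₂ l' => exact h.2.1
      | succ i =>
          simp only [List.getD_cons_succ]
          exact ih h.2 i (by simpa using hi)

lemma linked_last {x y : Q} (d : RStep Q) :
    ∀ (F : List (RStep Q)), Linked x F y → F ≠ [] →
      (F.getD (F.length - 1) d).q' = y := by
  intro F
  induction F generalizing x with
  | nil => intro _ h; exact absurd rfl h
  | cons s l ih =>
      intro h _
      cases l with
      | nil => exact h.2
      | cons s₂ l' =>
          have hlen : (s :: s₂ :: l').length - 1 = (s₂ :: l').length - 1 + 1 := by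
            simp
          rw [hlen, List.getD_cons_succ]
          exact ih h.2 (by simp)

lemma getD_mem {l : List (RStep Q)} {i : ℕ} {d : RStep Q} (h : i < l.length) :
    l.getD i d ∈ l := by
  rw [List.getD_eq_getElem _ _ h]
  exact List.getElem_mem _

/-- From an unbounded state, extract the short cyclic witness. -/
lemma unbounded_witness [Fintype Q] (B : BVASS1 Q) (p₀ : Q)
    (hinf : (B.reachSet p₀).Infinite) :
    ∃ (k : ℕ) (p : ℕ → Q) (t : ℕ → BTrans Q) (j : ℕ),
        k ≤ Fintype.card Q ∧ j < k ∧ p 0 = p₀ ∧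
        (∀ i, 1 ≤ i → i ≤ k →
          (t i).mem B ∧ (t i).src = p (i - 1) ∧ p i ∈ (t i).tgts) ∧
        p k = p j ∧ (∀ i < j, p i ≠ p j) ∧
        (∀ i, 1 ≤ i → i ≤ k → ∀ q ∈ (t i).tgts, B.Coverable q 0) ∧
        ∃ ns : ℕ → ℕ,
          (∀ i, j < i → i ≤ k →
            ns i ≤ Fintype.card Q + 1 ∧
            (∀ q z p', t i = .un q z p' → ns i = 0) ∧
            (∀ q a b, t i = .br q a b →
              ∃ p', ((a = p i ∧ p' = b) ∨ (b = p i ∧ p' = a)) ∧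
                B.Coverable p' (ns i))) ∧
          (∑ i ∈ Finset.Icc (j + 1) k, (t i).eff) <
            ∑ i ∈ Finset.Icc (j + 1) k, (ns i : ℤ) := by
  classical
  set cQ := Fintype.card Q with hcQ
  -- get a big reachable value
  obtain ⟨N, hNmem, hNbig⟩ := hinf.exists_gt (2 ^ cQ)
  have hre : B.Reach p₀ N := reachable_iff_reach.mp hNmem
  obtain ⟨c, hvalid, qf, hch⟩ := exists_chain hre
  set d : RStep Q := ⟨p₀, .un p₀ 0 p₀, p₀, 0, 0, 0⟩ with hd
  set e : Q × ℕ := (qf, 0) with he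
  set L : ℕ := c.length with hLdef
  set v : ℕ → ℕ := fun i => (ptf d c e i).2 with hv
  set st : ℕ → Q := fun i => (ptf d c e i).1 with hst
  have hpt0 : ptf d c e 0 = (p₀, N) := by
    have h := (chained_ptf (d := d) hch 0 (Nat.zero_le _)).1
    rw [List.take_zero] at h
    exact h.symm
  -- find the descent pair
  obtain ⟨a, bb, hab, hbbL, hstab, hvab⟩ := find_pair v st L
    (by rw [hv]; simp only; rw [ptf_ge (le_refl _)])
    (by
      intro i hi
      have h1 : v i = (c.getD i d).n := by rw [hv]; simp only; rw [ptf_lt hi]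
      have h2 : v (i+1) = (c.getD i d).n' := by
        rw [hv]; simp only; rw [ptf_consec hch i hi]
      have h3 := (hvalid (c.getD i d) (getD_mem (d := d) hi)).2.2.2.2.1
      omega)
    (by
      have h0 : v 0 = N := by rw [hv]; simp only; rw [hpt0]
      rw [← hcQ]
      omega)
  have haL : a < L := lt_of_lt_of_le hab hbbL
  -- the closed negative segment
  set seg : List (RStep Q) := (c.drop a).take (bb - a) with hseg
  have hdd : (c.drop a).drop (bb - a) = c.drop bb := by
    rw [List.drop_drop]
    congr 1
    omega
  have hCB : seg ++ c.drop bb = c.drop a := by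
    rw [← hdd, hseg]
    exact List.take_append_drop _ _
  have htakebb : c.take bb = c.take a ++ seg := by
    have h1 : bb = a + (bb - a) := by omega
    conv_lhs => rw [h1]
    rw [List.take_add]
  have hchsega : Chained (ptf d c e a) (c.drop a) e := (chained_ptf hch a (by omega)).2
  have hchsega' : Chained (ptf d c e a) (seg ++ c.drop bb) e := by
    rw [hCB]
    exact hchsega
  obtain ⟨y, hsegch, _⟩ := chained_append.mp hchsega'
  have hy : y = ptf d c e bb := by
    have h1 : Chained (p₀, N) (c.take a) (ptf d c e a) := (chained_ptf hch a (by omega)).1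
    have h2 : Chained (p₀, N) (c.take bb) y := by
      rw [htakebb]
      exact chained_append.mpr ⟨_, h1, hsegch⟩
    have h3 : Chained (p₀, N) (c.take bb) (ptf d c e bb) := (chained_ptf hch bb hbbL).1
    exact chained_unique h2 h3
  rw [hy] at hsegch
  have hsegvalid : ∀ s ∈ seg, s.Valid B := by
    intro s hs
    apply hvalid
    exact List.drop_subset _ _ (List.take_subset _ _ hs)
  have hsegsum : ((seg.map RStep.wt).sum) < 0 := by
    have := chained_wt hsegvalid hsegch
    have hva : (ptf d c e a).2 = v a := rfl
    have hvb : (ptf d c e bb).2 = v bb := rfl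
    omega
  have hseglink : Linked (st a) seg (st a) := by
    have := chained_linked hsegch
    have h2 : (ptf d c e bb).1 = st a := hstab.symm
    rw [h2] at this
    exact this
  -- extract simple cycle
  obtain ⟨l₂, q₂, hl₂ne, hl₂link, hl₂mem, hl₂sum, hl₂nodup⟩ :=
    extract_cycle seg.length seg (st a) le_rfl hseglink hsegsum
  set SC : Set Q := {x | x ∈ l₂.map RStep.q} with hSC
  have hl₂c : ∀ s ∈ l₂, s ∈ c := by
    intro s hs
    exact List.drop_subset _ _ (List.take_subset _ _ (hl₂mem s hs))
  have hq₂SC : q₂ ∈ SC := by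
    obtain ⟨s₀, l₂', rfl⟩ := List.exists_cons_of_ne_nil hl₂ne
    have h0 : s₀.q = q₂ := linked_head hl₂link
    rw [hSC]
    simp only [Set.mem_setOf_eq, List.map_cons]
    rw [h0]
    exact List.mem_cons_self
  -- a walk from p₀ to q₂
  obtain ⟨s₀, l₂', rfl⟩ := List.exists_cons_of_ne_nil hl₂ne
  have hs₀q : s₀.q = q₂ := linked_head hl₂link
  obtain ⟨X, Y, hXY⟩ := List.append_of_mem (hl₂c s₀ (List.mem_cons_self))
  have hchX : Chained (p₀, N) c e := hch
  rw [hXY] at hchX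
  obtain ⟨yx, hXch, hYch⟩ := chained_append.mp hchX
  have hyx : s₀.q = yx.1 := hYch.1
  have hXlink : Linked p₀ X q₂ := by
    have := chained_linked hXch
    rw [← hyx, hs₀q] at this
    exact this
  -- shorten the prefix
  obtain ⟨l', qq, hl'mem, hqqSC, hl'link, hl'nodup, hl'not⟩ :=
    extract_prefix X.length X p₀ q₂ SC le_rfl hXlink hq₂SC
  have hl'c : ∀ s ∈ l', s ∈ c := by
    intro s hs
    have : s ∈ X := hl'mem s hs
    rw [hXY]
    exact List.mem_append_left _ this
  -- rotate the cycle to start at qq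
  obtain ⟨C', hC'link, hC'perm⟩ := rotate_cycle hl₂link (by rw [hSC] at hqqSC; exact hqqSC)
  have hC'mem : ∀ s ∈ C', s ∈ c := fun s hs => hl₂c s (hC'perm.mem_iff.mp hs)
  have hC'ne : C' ≠ [] := by
    intro h
    have := hC'perm.length_eq
    rw [h] at this
    simp at this
  have hC'nodup : (C'.map RStep.q).Nodup := ((hC'perm.map RStep.q).nodup_iff).mpr hl₂nodup
  have hC'sum : ((C'.map RStep.wt).sum) < 0 := by
    have := (hC'perm.map RStep.wt).sum_eq
    omega
  have hC'SC : ∀ x, x ∈ C'.map RStep.q ↔ x ∈ SC := by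
    intro x
    rw [hSC]
    simp only [Set.mem_setOf_eq]
    exact (hC'perm.map RStep.q).mem_iff
  -- assemble
  set F : List (RStep Q) := l' ++ C' with hF
  set j : ℕ := l'.length with hj
  set k : ℕ := F.length with hk
  have hkj : k = j + C'.length := by rw [hk, hF, List.length_append, hj]
  have hjk : j < k := by
    have : C'.length ≠ 0 := fun h => hC'ne (List.length_eq_zero_iff.mp h)
    omega
  have hFlink : Linked p₀ F qq := linked_append.mpr ⟨qq, hl'link, hC'link⟩
  have hFvalid : ∀ s ∈ F, s.Valid B := by
    intro s hs
    rcases List.mem_append.mp hs with h | h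
    · exact hvalid s (hl'c s h)
    · exact hvalid s (hC'mem s h)
  have hFnodup : (F.map RStep.q).Nodup := by
    rw [hF, List.map_append]
    apply List.Nodup.append hl'nodup hC'nodup
    intro x hx hx'
    have h1 : x ∈ SC → False := by
      obtain ⟨s, hs, rfl⟩ := List.mem_map.mp hx
      exact fun hc => hl'not s hs hc
    exact h1 ((hC'SC x).mp hx')
  have hkcard : k ≤ cQ := by
    have h1 : (F.map RStep.q).length ≤ cQ := hFnodup.length_le_card
    rw [List.length_map] at h1
    exact h1
  -- the functions
  set p : ℕ → Q := fun i => if i < k then (F.getD i d).q else qq with hp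
  set t : ℕ → BTrans Q := fun i => (F.getD (i-1) d).t with ht
  set ns : ℕ → ℕ := fun i => min ((F.getD (i-1) d).side) (cQ + 1) with hns
  -- basic facts about p
  have hp_lt : ∀ i, i < k → p i = (F.getD i d).q := by
    intro i hi
    rw [hp]
    simp only
    rw [if_pos hi]
  have hp_k : p k = qq := by rw [hp]; simp
  have hpsucc : ∀ i, 1 ≤ i → i ≤ k → p i = (F.getD (i-1) d).q' := by
    intro i h1 h2
    rcases lt_or_eq_of_le h2 with h | h
    · rw [hp_lt i h]
      have := linked_consec d F hFlink (i-1) (by omega)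
      have heq : i - 1 + 1 = i := by omega
      rw [heq] at this
      exact this
    · rw [h, hp_k]
      rw [← linked_last d F hFlink (by
        intro hcon
        rw [hcon] at hk
        simp [hk] at hjk)]
  have hFne : F ≠ [] := by
    intro h
    rw [h] at hk
    simp [hk] at hjk
  have hp0 : p 0 = p₀ := by
    obtain ⟨s₁, F₁, hF1⟩ := List.exists_cons_of_ne_nil hFne
    have hh : s₁.q = p₀ := by
      rw [hF1] at hFlink
      exact linked_head hFlink
    rw [hp_lt 0 (by omega), hF1]
    simp only [List.getD_cons_zero]
    exact hh
  have hp_j : p j = qq := by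
    rw [hp_lt j hjk]
    rw [hF, List.getD_append_right _ _ _ _ (by omega)]
    have hjj : j - l'.length = 0 := by omega
    rw [hjj]
    rcases List.exists_cons_of_ne_nil hC'ne with ⟨s₁, C₁, hC1⟩
    rw [hC1]
    rw [hC1] at hC'link
    exact linked_head hC'link
  refine ⟨k, p, t, j, hkcard, hjk, hp0, ?_, ?_, ?_, ?_, ?_⟩
  · -- step conditions
    intro i h1 h2
    have hi1 : i - 1 < k := by omega
    set s : RStep Q := F.getD (i-1) d with hsdef
    have hsv : s.Valid B := hFvalid s (getD_mem hi1)
    refine ⟨hsv.1, ?_, ?_⟩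
    · rw [ht]
      simp only
      rw [hsv.2.1, hp_lt (i-1) hi1]
    · rw [ht]
      simp only
      rw [hpsucc i h1 h2]
      exact hsv.2.2.1
  · -- p k = p j
    rw [hp_k, hp_j]
  · -- p i ≠ p j for i < j
    intro i hij
    rw [hp_j, hp_lt i (by omega)]
    have hgd : F.getD i d = l'.getD i d := by
      rw [hF]
      exact List.getD_append _ _ _ _ (by omega)
    rw [hgd]
    have hmem : l'.getD i d ∈ l' := by
      have hil : i < l'.length := by omega
      rw [List.getD_eq_getElem _ _ hil]
      exact List.getElem_mem _
    have hnot := hl'not _ hmem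
    intro hcon
    rw [hcon] at hnot
    exact hnot hqqSC
  · -- coverability of targets
    intro i h1 h2 q hq
    have hi1 : i - 1 < k := by omega
    obtain ⟨hmem, hsrc, htgt, heqv, hmax, hreach, hunc, hbrc⟩ :=
      hFvalid _ (getD_mem (l := F) (d := d) hi1)
    rw [ht] at hq
    simp only at hq
    rcases hts : (F.getD (i-1) d).t with ⟨q₀, q₁, q₁'⟩ | ⟨q₀, z, q₁⟩
    · -- branching
      obtain ⟨p', hp'or, hp're⟩ := hbrc q₀ q₁ q₁' hts
      rw [hts] at hq htgt
      simp only [BTrans.tgts, Set.mem_insert_iff, Set.mem_singleton_iff] at hq htgt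
      have hcovq' : B.Coverable (F.getD (i-1) d).q' 0 := ⟨_, Nat.zero_le _, hreach.reachable⟩
      have hcovp' : B.Coverable p' 0 := ⟨_, Nat.zero_le _, hp're.reachable⟩
      rcases hq with rfl | rfl
      · rcases hp'or with ⟨ha, rfl⟩ | ⟨hb, rfl⟩
        · rw [ha]; exact hcovq'
        · exact hcovp'
      · rcases hp'or with ⟨ha, rfl⟩ | ⟨hb, rfl⟩
        · exact hcovp'
        · rw [hb]; exact hcovq'
    · -- unary
      rw [hts] at hq htgt
      simp only [BTrans.tgts, Set.mem_singleton_iff] at hq htgt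
      subst hq
      rw [← htgt]
      exact ⟨_, Nat.zero_le _, hreach.reachable⟩
  · -- the ns function
    refine ⟨ns, ?_, ?_⟩
    · intro i hji h2
      have hi1 : i - 1 < k := by omega
      obtain ⟨hmem, hsrc, htgt, heqv, hmax, hreach, hunc, hbrc⟩ :=
        hFvalid _ (getD_mem (l := F) (d := d) hi1)
      refine ⟨min_le_right _ _, ?_, ?_⟩
      · intro q z p' hti
        rw [ht] at hti
        simp only at hti
        have hside := hunc q z p' hti
        rw [hns]
        simp only
        rw [hside]
        simp
      · intro q aa bbb hti
        rw [ht] at hti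
        simp only at hti
        obtain ⟨p', hp'or, hp're⟩ := hbrc q aa bbb hti
        refine ⟨p', ?_, ?_⟩
        · rw [hpsucc i (by omega) h2]
          exact hp'or
        · refine ⟨(F.getD (i-1) d).side, ?_, hp're.reachable⟩
          rw [hns]
          simp only
          exact min_le_left _ _
    · -- the sum inequality
      have hkj' : k = j + C'.length := hkj
      have hsum_eff : ∑ i ∈ Finset.Icc (j + 1) k, (t i).eff
          = (C'.map (fun s => s.t.eff)).sum := by
        rw [hkj']
        rw [← sum_Icc_getD (fun s => s.t.eff) d C' j]
        apply Finset.sum_congr rfl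
        intro i hi
        simp only [Finset.mem_Icc] at hi
        rw [ht]
        simp only
        have hid : F.getD (i-1) d = C'.getD (i-1-j) d := by
          rw [hF, List.getD_append_right _ _ _ _ (by omega)]
          all_goals (first | rfl | (congr 1; omega))
        rw [hid]
      have hsum_ns : ∑ i ∈ Finset.Icc (j + 1) k, ((ns i : ℤ))
          = (C'.map (fun s => ((min s.side (cQ + 1) : ℕ) : ℤ))).sum := by
        rw [hkj']
        rw [← sum_Icc_getD (fun s => ((min s.side (cQ + 1) : ℕ) : ℤ)) d C' j]
        apply Finset.sum_congr rfl
        intro i hi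
        simp only [Finset.mem_Icc] at hi
        rw [hns]
        simp only
        have hid : F.getD (i-1) d = C'.getD (i-1-j) d := by
          rw [hF, List.getD_append_right _ _ _ _ (by omega)]
          all_goals (first | rfl | (congr 1; omega))
        rw [hid]
      rw [hsum_eff, hsum_ns]
      have hwt : ((C'.map RStep.wt).sum)
          = (C'.map (fun s => s.t.eff)).sum - (C'.map (fun s => (s.side : ℤ))).sum := by
        rw [← list_sum_sub]
        rfl
      by_cases hall : ∀ s ∈ C', s.side ≤ cQ + 1
      · have : (C'.map (fun s => ((min s.side (cQ + 1) : ℕ) : ℤ)))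
            = (C'.map (fun s => (s.side : ℤ))) := by
          apply List.map_congr_left
          intro s hs
          congr 1
          exact min_eq_left (hall s hs)
        rw [this]
        omega
      · push_neg at hall
        obtain ⟨s₁, hs₁mem, hs₁big⟩ := hall
        have hns1 : ((cQ + 1 : ℕ) : ℤ) ≤ (C'.map (fun s => ((min s.side (cQ + 1) : ℕ) : ℤ))).sum := by
          have hsingle := List.single_le_sum (l := C'.map (fun s => ((min s.side (cQ + 1) : ℕ) : ℤ)))
            (by
              intro x hx
              obtain ⟨s, hs, rfl⟩ := List.mem_map.mp hx
              exact Int.natCast_nonneg _)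
            _ (List.mem_map_of_mem (f := fun s => ((min s.side (cQ + 1) : ℕ) : ℤ)) hs₁mem)
          have hterm : min s₁.side (cQ + 1) = cQ + 1 := min_eq_right (le_of_lt hs₁big)
          rw [hterm] at hsingle
          exact hsingle
        have heffbound : (C'.map (fun s => s.t.eff)).sum ≤ (C'.length : ℤ) := by
          have h1 : ∀ x ∈ C'.map (fun s => s.t.eff), x ≤ 1 := by
            intro x hx
            obtain ⟨s, hs, rfl⟩ := List.mem_map.mp hx
            have hsv : s.Valid B := hFvalid s (by rw [hF]; exact List.mem_append_right _ hs)
            have hm := hsv.1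
            rcases hts : s.t with ⟨q₀, q₁, q₁'⟩ | ⟨q₀, z, q₁⟩
            · simp [BTrans.eff]
            · rw [hts] at hm
              have hz := B.un_small _ _ _ hm
              simp only [BTrans.eff]
              omega
          calc (C'.map (fun s => s.t.eff)).sum
              ≤ (C'.map (fun s => s.t.eff)).length • (1:ℤ) := List.sum_le_card_nsmul _ _ h1
            _ = (C'.length : ℤ) := by simp
        have hClen : (C'.length : ℤ) ≤ (cQ : ℤ) := by
          have : C'.length ≤ k := by omega
          have := hkcard
          exact_mod_cast by omega
        omega

end BVASS1
end Dev9

/-- Characterisation of unbounded control states via short cyclic witness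
sequences of states and transitions. -/
theorem stmt16 {Q : Type} [Fintype Q] (B : BVASS1 Q) (p₀ : Q) :
    (B.reachSet p₀).Infinite ↔
      ∃ (k : ℕ) (p : ℕ → Q) (t : ℕ → BTrans Q) (j : ℕ),
        k ≤ Fintype.card Q ∧ j < k ∧ p 0 = p₀ ∧
        (∀ i, 1 ≤ i → i ≤ k →
          (t i).mem B ∧ (t i).src = p (i - 1) ∧ p i ∈ (t i).tgts) ∧
        p k = p j ∧ (∀ i < j, p i ≠ p j) ∧
        (∀ i, 1 ≤ i → i ≤ k → ∀ q ∈ (t i).tgts, B.Coverable q 0) ∧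
        ∃ ns : ℕ → ℕ,
          (∀ i, j < i → i ≤ k →
            ns i ≤ Fintype.card Q + 1 ∧
            (∀ q z p', t i = .un q z p' → ns i = 0) ∧
            (∀ q a b, t i = .br q a b →
              ∃ p', ((a = p i ∧ p' = b) ∨ (b = p i ∧ p' = a)) ∧
                B.Coverable p' (ns i))) ∧
          (∑ i ∈ Finset.Icc (j + 1) k, (t i).eff) <
            ∑ i ∈ Finset.Icc (j + 1) k, (ns i : ℤ) := by
  constructor
  · exact fun hinf => BVASS1.unbounded_witness B p₀ hinf
  · rintro ⟨k, p, t, j, _, hjk, hp0, hsteps, hpk, _, hcov, ns, hns, hsum⟩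
    exact BVASS1.pump B p₀ k p t j ns hjk hp0 hsteps hpk hcov hns hsum
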